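/- Fix m and k with 2k ≤ m, and let f : [m]_k → ℕ be a committee scoring function. Suppose the committee scoring rule defined by f satisfies the fixed-majority criterion for m candidates and committee size k. Then f is top-k-counting: there is a function g : {0,…,k} → ℕ such that f(i_1,…,i_k) = g(|{t ∈ [k] : i_t ≤ k}|) for every (i_1,…,i_k) ∈ [m]_k. -/

import Mathlib

lemma aux_countP_replicate {α} (p : α → Bool) (n : ℕ) (a : α) :
    (List.replicate n a).countP p = if p a then n else 0 := by
  induction n with
  | zero => simp
  | succ n ih => simp [List.replicate_succ, List.countP_cons, ih]; split_ifs <;> simp_all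

lemma aux_sort_image {k : ℕ} (τ : Fin k → ℕ) (hτ : StrictMono τ) (F : Finset ℕ)
    (hF : F = Finset.image τ Finset.univ) : F.sort (· ≤ ·) = List.ofFn τ := by
  apply List.Perm.eq_of_pairwise' (Finset.pairwise_sort _ _)
    (by exact (List.sortedLE_ofFn_iff.2 hτ.monotone).pairwise)
  refine (List.perm_ext_iff_of_nodup (Finset.sort_nodup _ _) ?_).2 ?_
  · exact (List.nodup_ofFn).2 hτ.injective
  · intro x
    rw [Finset.mem_sort, hF, List.mem_ofFn]
    simp [Finset.mem_image, Set.mem_range, eq_comm]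

lemma aux_getD_sort {k : ℕ} (τ : Fin k → ℕ) (hτ : StrictMono τ) (F : Finset ℕ)
    (hF : F = Finset.image τ Finset.univ) (t : Fin k) :
    (F.sort (· ≤ ·)).getD (t : ℕ) 0 = τ t := by
  rw [aux_sort_image τ hτ F hF]
  rw [List.getD_eq_getElem _ _ (by simp [List.length_ofFn, t.isLt])]
  simp

lemma aux_gap {k : ℕ} {I : Fin k → ℕ} (hI : StrictMono I) :
    ∀ (d : ℕ) (a b : Fin k), (b : ℕ) = (a : ℕ) + d → I a + d ≤ I b := by
  intro d
  induction d with
  | zero => intro a b h; rw [show a = b from Fin.ext h.symm]; omega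
  | succ d ih =>
    intro a b h
    have hb' : ((a : ℕ) + d) < k := by omega
    have h1 := ih a ⟨(a : ℕ) + d, hb'⟩ rfl
    have h2 : I ⟨(a : ℕ) + d, hb'⟩ < I b := hI (by simp [Fin.lt_def]; omega)
    omega

/-- minimal increasing sequence with `s` entries `≤ k` -/
def sMin (k s : ℕ) : Fin k → ℕ :=
  fun t => if (t : ℕ) < s then (t : ℕ) + 1 else (t : ℕ) + (k - s) + 1

/-- maximal increasing sequence (bounded by `m`) with `s` entries `≤ k` -/
def sMax (m k s : ℕ) : Fin k → ℕ :=
  fun t => if (t : ℕ) < s then (t : ℕ) + (k - s) + 1 else (t : ℕ) + (m - k) + 1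

def wiota (m k : ℕ) (h : k ≤ m) : Fin k → Fin m :=
  fun t => ⟨(t : ℕ), lt_of_lt_of_le t.isLt h⟩

def siota (m k s : ℕ) (h : 2 * k ≤ m) : Fin k → Fin m :=
  fun t => ⟨if (t : ℕ) < s then (t : ℕ) else (t : ℕ) + (k - s),
    by have := t.isLt; split_ifs <;> omega⟩

def vfun (m k s : ℕ) (h : 2 * k ≤ m) (hs : s ≤ k) : Fin m → Fin m :=
  fun c => ⟨if (c : ℕ) < s then (c : ℕ) + (k - s)
    else if (c : ℕ) < k then (c : ℕ) + (m - k)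
    else if (c : ℕ) < 2 * k - s then (c : ℕ) - k
    else (c : ℕ) - (k - s), by have := c.isLt; split_ifs <;> omega⟩

lemma vfun_inj (m k s : ℕ) (h : 2 * k ≤ m) (hs : s ≤ k) :
    Function.Injective (vfun m k s h hs) := by
  intro a b hab
  have h1 := congrArg Fin.val hab
  simp only [vfun] at h1
  have ha := a.isLt; have hb := b.isLt
  apply Fin.ext
  split_ifs at h1 <;> omega

noncomputable def vperm (m k s : ℕ) (h : 2 * k ≤ m) (hs : s ≤ k) : Fin m ≃ Fin m :=
  Equiv.ofBijective _ (Finite.injective_iff_bijective.mp (vfun_inj m k s h hs))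

lemma vperm_val (m k s : ℕ) (h : 2 * k ≤ m) (hs : s ≤ k) (c : Fin m) :
    ((vperm m k s h hs c : Fin m) : ℕ) = if (c : ℕ) < s then (c : ℕ) + (k - s)
    else if (c : ℕ) < k then (c : ℕ) + (m - k)
    else if (c : ℕ) < 2 * k - s then (c : ℕ) - k
    else (c : ℕ) - (k - s) := rfl

lemma siota_val (m k s : ℕ) (h : 2 * k ≤ m) (t : Fin k) :
    ((siota m k s h t : Fin m) : ℕ) = if (t : ℕ) < s then (t : ℕ) else (t : ℕ) + (k - s) := rfl

lemma wiota_val (m k : ℕ) (h : k ≤ m) (t : Fin k) :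
    ((wiota m k h t : Fin m) : ℕ) = (t : ℕ) := rfl

section Key

variable (m k : ℕ)

lemma key_lemma (s : ℕ) (hmk : 2 * k ≤ m) (hsk : s < k)
    (f : (Fin k → ℕ) → ℕ)
    (hdom : ∀ I J : Fin k → ℕ, StrictMono I → StrictMono J →
      (∀ t, 1 ≤ I t ∧ I t ≤ m) → (∀ t, 1 ≤ J t ∧ J t ≤ m) →
      (∀ t, I t ≤ J t) → f J ≤ f I)
    (score : List (Fin m ≃ Fin m) → Finset (Fin m) → ℕ)
    (hscore : ∀ V S, score V S =
      (V.map (fun v => f (fun t =>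
        ((S.image (fun c => (v c : ℕ) + 1)).sort (· ≤ ·)).getD t 0))).sum)
    (hfm : ∀ (V : List (Fin m ≃ Fin m)) (W : Finset (Fin m)), W.card = k →
      V.length < 2 * V.countP (fun v => decide (∀ c ∈ W, (v c : ℕ) < k)) →
      ∀ S : Finset (Fin m), S.card = k → S ≠ W → score V S < score V W) :
    f (sMin k s) ≤ f (sMax m k s) := by
  have hkm : k ≤ m := by omega
  have hsk' : s ≤ k := le_of_lt hsk
  set W : Finset (Fin m) := Finset.image (wiota m k hkm) Finset.univ with hW
  set S : Finset (Fin m) := Finset.image (siota m k s hmk) Finset.univ with hS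
  set vA : Fin m ≃ Fin m := Equiv.refl (Fin m) with hvA
  set vB : Fin m ≃ Fin m := vperm m k s hmk hsk' with hvB
  set N : ℕ := f (sMin k k) with hN
  set V : List (Fin m ≃ Fin m) :=
    List.replicate (N + 1) vA ++ List.replicate N vB with hV
  -- cards
  have hwinj : Function.Injective (wiota m k hkm) := by
    intro a b hab
    have h1 := congrArg Fin.val hab
    exact Fin.ext h1
  have hsinj : Function.Injective (siota m k s hmk) := by
    intro a b hab
    have h1 := congrArg Fin.val hab
    simp only [siota_val] at h1
    have := a.isLt; have := b.isLt
    apply Fin.ext; split_ifs at h1 <;> omega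
  have hWcard : W.card = k := by
    rw [hW, Finset.card_image_of_injective _ hwinj]; simp
  have hScard : S.card = k := by
    rw [hS, Finset.card_image_of_injective _ hsinj]; simp
  have hSneW : S ≠ W := by
    intro hEq
    have hmem : siota m k s hmk ⟨s, hsk⟩ ∈ W := by
      rw [← hEq]; exact Finset.mem_image_of_mem _ (Finset.mem_univ _)
    obtain ⟨t, -, ht⟩ := Finset.mem_image.1 hmem
    have h1 : (t : ℕ) = if s < s then s else s + (k - s) := congrArg Fin.val ht
    rw [if_neg (lt_irrefl s)] at h1
    have := t.isLt; omega
  -- the four image identities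
  have himgWA : W.image (fun c => ((vA c : Fin m) : ℕ) + 1)
      = Finset.image (sMin k k) Finset.univ := by
    rw [hW, Finset.image_image]
    refine congrArg (fun F => Finset.image F Finset.univ) (funext fun t => ?_)
    simp only [Function.comp, hvA, Equiv.refl_apply, wiota_val, sMin]
    have := t.isLt
    split_ifs <;> omega
  have himgSA : S.image (fun c => ((vA c : Fin m) : ℕ) + 1)
      = Finset.image (sMin k s) Finset.univ := by
    rw [hS, Finset.image_image]
    refine congrArg (fun F => Finset.image F Finset.univ) (funext fun t => ?_)
    simp only [Function.comp, hvA, Equiv.refl_apply, siota_val, sMin]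
    have := t.isLt
    split_ifs <;> omega
  have himgWB : W.image (fun c => ((vB c : Fin m) : ℕ) + 1)
      = Finset.image (sMax m k s) Finset.univ := by
    rw [hW, Finset.image_image]
    refine congrArg (fun F => Finset.image F Finset.univ) (funext fun t => ?_)
    simp only [Function.comp, hvB, vperm_val, wiota_val, sMax]
    have := t.isLt
    split_ifs <;> simp_all <;> omega
  have himgSB : S.image (fun c => ((vB c : Fin m) : ℕ) + 1)
      = Finset.image (sMin k k) Finset.univ := by
    have hcomp : ∀ t : Fin k, ((vB (siota m k s hmk t) : Fin m) : ℕ) + 1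
        = if (t : ℕ) < s then (t : ℕ) + (k - s) + 1 else (t : ℕ) - s + 1 := by
      intro t
      rw [hvB, vperm_val, siota_val]
      have := t.isLt
      split_ifs <;> omega
    rw [hS, Finset.image_image]
    ext x
    simp only [Finset.mem_image, Finset.mem_univ, true_and, Function.comp]
    constructor
    · rintro ⟨t, rfl⟩
      rw [hcomp t]
      have ht := t.isLt
      refine ⟨⟨(if (t : ℕ) < s then (t : ℕ) + (k - s) + 1 else (t : ℕ) - s + 1) - 1,
        by split_ifs <;> omega⟩, ?_⟩
      simp only [sMin]
      split_ifs <;> omega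
    · rintro ⟨t, rfl⟩
      have ht := t.isLt
      have hval : sMin k k t = (t : ℕ) + 1 := by simp [sMin, ht]
      by_cases hcase : (t : ℕ) < k - s
      · refine ⟨⟨(t : ℕ) + s, by omega⟩, ?_⟩
        rw [hcomp]
        simp only [hval]
        split_ifs <;> simp_all <;> omega
      · refine ⟨⟨(t : ℕ) - (k - s), by omega⟩, ?_⟩
        rw [hcomp]
        simp only [hval]
        split_ifs <;> simp_all <;> omega
  -- strict mono facts
  have hsmtop : StrictMono (sMin k k) := by
    intro a b hab; have : (a : ℕ) < (b : ℕ) := hab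
    simp only [sMin]; split_ifs <;> omega
  have hsmmin : StrictMono (sMin k s) := by
    intro a b hab; have : (a : ℕ) < (b : ℕ) := hab
    simp only [sMin]; split_ifs <;> omega
  have hsmmax : StrictMono (sMax m k s) := by
    intro a b hab; have : (a : ℕ) < (b : ℕ) := hab
    have := a.isLt; have := b.isLt
    simp only [sMax]; split_ifs <;> omega
  -- score computation
  have hterm : ∀ (v : Fin m ≃ Fin m) (C : Finset (Fin m)) (τ : Fin k → ℕ),
      StrictMono τ →
      C.image (fun c => ((v c : Fin m) : ℕ) + 1) = Finset.image τ Finset.univ →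
      (fun t : Fin k =>
        ((C.image (fun c => (v c : ℕ) + 1)).sort (· ≤ ·)).getD t 0) = τ := by
    intro v C τ hτ h
    funext t
    exact aux_getD_sort τ hτ _ h t
  have eWA := hterm vA W (sMin k k) hsmtop himgWA
  have eSA := hterm vA S (sMin k s) hsmmin himgSA
  have eWB := hterm vB W (sMax m k s) hsmmax himgWB
  have eSB := hterm vB S (sMin k k) hsmtop himgSB
  have hsW : score V W = (N + 1) * f (sMin k k) + N * f (sMax m k s) := by
    rw [hscore, hV]
    simp only [List.map_append, List.map_replicate, List.sum_append,
      List.sum_replicate, smul_eq_mul]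
    rw [eWA, eWB]
  have hsS : score V S = (N + 1) * f (sMin k s) + N * f (sMin k k) := by
    rw [hscore, hV]
    simp only [List.map_append, List.map_replicate, List.sum_append,
      List.sum_replicate, smul_eq_mul]
    rw [eSA, eSB]
  -- majority count
  have hmaj : V.length <
      2 * V.countP (fun v => decide (∀ c ∈ W, ((v c : Fin m) : ℕ) < k)) := by
    have hA : (∀ c ∈ W, ((vA c : Fin m) : ℕ) < k) := by
      intro c hc
      obtain ⟨t, -, rfl⟩ := Finset.mem_image.1 hc
      simp only [hvA, Equiv.refl_apply, wiota_val]
      exact t.isLt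
    have hB : ¬ (∀ c ∈ W, ((vB c : Fin m) : ℕ) < k) := by
      intro hcon
      have hmem : wiota m k hkm ⟨s, hsk⟩ ∈ W := Finset.mem_image_of_mem _ (Finset.mem_univ _)
      have h4 : (if s < s then s + (k - s) else if s < k then s + (m - k)
          else if s < 2 * k - s then s - k else s - (k - s)) < k := hcon _ hmem
      rw [if_neg (lt_irrefl s), if_pos hsk] at h4
      omega
    rw [hV, List.countP_append, aux_countP_replicate, aux_countP_replicate,
      List.length_append, List.length_replicate, List.length_replicate]
    rw [if_pos (by simpa using hA), if_neg (by simpa using hB)]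
    omega
  have hlt := hfm V W hWcard hmaj S hScard hSneW
  rw [hsW, hsS] at hlt
  -- arithmetic conclusion
  have hba : f (sMax m k s) ≤ f (sMin k s) := by
    refine hdom _ _ hsmmin hsmmax ?_ ?_ ?_
    · intro t; have := t.isLt; simp only [sMin]; split_ifs <;> omega
    · intro t; have := t.isLt; simp only [sMax]; split_ifs <;> omega
    · intro t; have := t.isLt; simp only [sMin, sMax]; split_ifs <;> omega
  have hac : f (sMin k s) ≤ N := by
    rw [hN]
    refine hdom _ _ hsmtop hsmmin ?_ ?_ ?_
    · intro t; have := t.isLt; simp only [sMin]; split_ifs <;> omega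
    · intro t; have := t.isLt; simp only [sMin]; split_ifs <;> omega
    · intro t; have := t.isLt; simp only [sMin]; split_ifs <;> omega
  by_contra hcon
  push_neg at hcon
  nlinarith [hlt, hba, hac]

end Key

theorem fixed_majority_implies_top_k_counting (m k : ℕ) (hmk : 2 * k ≤ m)
    (f : (Fin k → ℕ) → ℕ)
    (hdom : ∀ I J : Fin k → ℕ, StrictMono I → StrictMono J →
      (∀ t, 1 ≤ I t ∧ I t ≤ m) → (∀ t, 1 ≤ J t ∧ J t ≤ m) →
      (∀ t, I t ≤ J t) → f J ≤ f I)
    (score : List (Fin m ≃ Fin m) → Finset (Fin m) → ℕ)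
    (hscore : ∀ V S, score V S =
      (V.map (fun v => f (fun t =>
        ((S.image (fun c => (v c : ℕ) + 1)).sort (· ≤ ·)).getD t 0))).sum)
    (hfm : ∀ (V : List (Fin m ≃ Fin m)) (W : Finset (Fin m)), W.card = k →
      V.length < 2 * V.countP (fun v => decide (∀ c ∈ W, (v c : ℕ) < k)) →
      ∀ S : Finset (Fin m), S.card = k → S ≠ W → score V S < score V W) :
    ∃ g : ℕ → ℕ, ∀ I : Fin k → ℕ, StrictMono I → (∀ t, 1 ≤ I t ∧ I t ≤ m) →
      f I = g (Finset.univ.filter (fun t => I t ≤ k)).card := by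
  refine ⟨fun s => f (sMin k s), ?_⟩
  intro I hI hb
  set s := (Finset.univ.filter (fun t => I t ≤ k)).card with hs
  show f I = f (sMin k s)
  have hsle : s ≤ k := by
    have h1 : (Finset.univ.filter (fun t => I t ≤ k)).card ≤ (Finset.univ : Finset (Fin k)).card :=
      Finset.card_filter_le _ _
    simpa [← hs] using h1
  -- characterization of s
  have hch : ∀ t : Fin k, I t ≤ k ↔ (t : ℕ) < s := by
    intro t
    constructor
    · intro h
      have hsub : Finset.Iic t ⊆ Finset.univ.filter (fun t => I t ≤ k) := by
        intro t' ht'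
        simp only [Finset.mem_Iic] at ht'
        simp only [Finset.mem_filter, Finset.mem_univ, true_and]
        exact le_trans (hI.monotone ht') h
      have hcard := Finset.card_le_card hsub
      rw [Fin.card_Iic] at hcard
      omega
    · intro h
      by_contra hc
      push_neg at hc
      have hsub : Finset.univ.filter (fun t => I t ≤ k) ⊆ Finset.Iio t := by
        intro t' ht'
        simp only [Finset.mem_filter, Finset.mem_univ, true_and] at ht'
        simp only [Finset.mem_Iio]
        by_contra hc2
        push_neg at hc2
        exact absurd (le_trans (hI.monotone hc2) ht') (by omega)
      have hcard := Finset.card_le_card hsub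
      rw [Fin.card_Iio] at hcard
      omega
  -- pointwise bounds on I
  have hlow : ∀ t : Fin k, sMin k s t ≤ I t := by
    intro t
    have htk := t.isLt
    by_cases h : (t : ℕ) < s
    · have h0 : (0 : ℕ) < k := by omega
      have hg := aux_gap hI (t : ℕ) ⟨0, h0⟩ t (by simp)
      have h1 := (hb ⟨0, h0⟩).1
      simp only [sMin, if_pos h]
      omega
    · push_neg at h
      have hsk2 : s < k := by omega
      have hg := aux_gap hI ((t : ℕ) - s) ⟨s, hsk2⟩ t (by simp; omega)
      have h1 : k + 1 ≤ I ⟨s, hsk2⟩ := by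
        have := (hch ⟨s, hsk2⟩).not
        simp only [not_lt, not_le] at this
        have h2 : ¬ ((⟨s, hsk2⟩ : Fin k) : ℕ) < s := by simp
        by_contra hcc
        push_neg at hcc
        exact h2 ((hch ⟨s, hsk2⟩).1 (by omega))
      simp only [sMin, if_neg (not_lt.2 h)]
      omega
  have hhigh : ∀ t : Fin k, I t ≤ sMax m k s t := by
    intro t
    have htk := t.isLt
    by_cases h : (t : ℕ) < s
    · have hs1 : s - 1 < k := by omega
      have hg := aux_gap hI (s - 1 - (t : ℕ)) t ⟨s - 1, hs1⟩ (by simp; omega)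
      have h1 : I ⟨s - 1, hs1⟩ ≤ k := (hch ⟨s - 1, hs1⟩).2 (by simp; omega)
      simp only [sMax, if_pos h]
      omega
    · push_neg at h
      have hk1 : k - 1 < k := by omega
      have hg := aux_gap hI (k - 1 - (t : ℕ)) t ⟨k - 1, hk1⟩ (by simp; omega)
      have h1 : I ⟨k - 1, hk1⟩ ≤ m := (hb ⟨k - 1, hk1⟩).2
      simp only [sMax, if_neg (not_lt.2 h)]
      omega
  have hsmmin : StrictMono (sMin k s) := by
    intro a b hab; have : (a : ℕ) < (b : ℕ) := hab
    simp only [sMin]; split_ifs <;> omega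
  have hsmmax : StrictMono (sMax m k s) := by
    intro a b hab; have : (a : ℕ) < (b : ℕ) := hab
    have := a.isLt; have := b.isLt
    simp only [sMax]; split_ifs <;> omega
  have hbmin : ∀ t : Fin k, 1 ≤ sMin k s t ∧ sMin k s t ≤ m := by
    intro t; have := t.isLt; simp only [sMin]; split_ifs <;> omega
  have hbmax : ∀ t : Fin k, 1 ≤ sMax m k s t ∧ sMax m k s t ≤ m := by
    intro t; have := t.isLt; simp only [sMax]; split_ifs <;> omega
  have h1 : f I ≤ f (sMin k s) := hdom _ _ hsmmin hI hbmin hb hlow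
  have h2 : f (sMax m k s) ≤ f I := hdom _ _ hI hsmmax hb hbmax hhigh
  have h4 : f (sMin k s) ≤ f (sMax m k s) := by
    rcases eq_or_lt_of_le hsle with heq | hlt
    · have heq2 : sMin k s = sMax m k s := by
        funext t; have := t.isLt
        simp only [sMin, sMax]; split_ifs <;> omega
      rw [heq2]
    · exact key_lemma m k s hmk hlt f hdom score hscore hfm
  omega
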